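/- Suppose X, Y are Hausdorff topological spaces with Y path-connected, and f: X → Y is a surjective, proper, local homeomorphism. Then f is a covering map. -/

import Mathlib

open Set Topology

section Aux

variable {X Y : Type*} [TopologicalSpace X] [TopologicalSpace Y] {f : X → Y}

/-- Fibers of a local homeomorphism are discrete. -/
lemma aux_fiber_discrete (hloc : IsLocalHomeomorph f) (y : Y) :
    DiscreteTopology ↥(f ⁻¹' {y}) := by
  rw [discreteTopology_iff_isOpen_singleton]
  rintro ⟨x, hx⟩
  obtain ⟨e, hxe, rfl⟩ := hloc x
  have key : ({⟨x, hx⟩} : Set ↥((⇑e) ⁻¹' {y})) = Subtype.val ⁻¹' e.source := by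
    ext ⟨z, hz⟩
    simp only [Set.mem_preimage, Set.mem_singleton_iff, Subtype.ext_iff]
    constructor
    · rintro rfl; exact hxe
    · intro hze
      exact e.injOn hze hxe (hz.trans hx.symm)
  rw [key]
  exact e.open_source.preimage continuous_subtype_val

/-- Fibers are finite. -/
lemma aux_fiber_finite (hloc : IsLocalHomeomorph f)
    (hproper : ∀ K : Set Y, IsCompact K → IsCompact (f ⁻¹' K)) (y : Y) :
    (f ⁻¹' {y}).Finite :=
  (hproper {y} isCompact_singleton).finite (isDiscrete_iff_discreteTopology.mpr (aux_fiber_discrete hloc y))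

/-- Around a point `y`, choose charts and pairwise disjoint open neighborhoods of fiber points. -/
lemma aux_sheets [T2Space X] (hloc : IsLocalHomeomorph f) (y : Y)
    (hfin : (f ⁻¹' {y}).Finite) :
    ∃ (e : X → OpenPartialHomeomorph X Y) (U : X → Set X),
      (∀ x, f = ⇑(e x)) ∧
      (∀ x, IsOpen (U x)) ∧ (∀ x ∈ f ⁻¹' {y}, x ∈ U x) ∧
      (∀ x, U x ⊆ (e x).source) ∧
      (f ⁻¹' {y}).PairwiseDisjoint U := by
  choose e hxe hfe using hloc
  obtain ⟨W, hW, hWd⟩ := hfin.t2_separation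
  exact ⟨e, fun x => (e x).source ∩ W x, hfe,
    fun x => (e x).open_source.inter (hW x).2,
    fun x _ => ⟨hxe x, (hW x).1⟩,
    fun x => Set.inter_subset_left,
    fun a ha b hb hab => (hWd ha hb hab).mono Set.inter_subset_right Set.inter_subset_right⟩

end Aux

section Aux2

variable {X Y : Type*} [TopologicalSpace X] [TopologicalSpace Y] {f : X → Y}

/-- The fiber cardinality is locally constant along compact subsets of the base. -/
lemma aux_local_count [T2Space X] [T2Space Y] (hf : Continuous f)
    (hproper : ∀ K : Set Y, IsCompact K → IsCompact (f ⁻¹' K))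
    (hloc : IsLocalHomeomorph f) {K : Set Y} (hK : IsCompact K) {y : Y} (hy : y ∈ K) :
    ∃ V : Set Y, IsOpen V ∧ y ∈ V ∧
      ∀ y' ∈ V ∩ K, (f ⁻¹' {y'}).ncard = (f ⁻¹' {y}).ncard := by
  have hfin : (f ⁻¹' {y}).Finite := aux_fiber_finite hloc hproper y
  obtain ⟨e, U, hfe, hUo, hUm, hUs, hUd⟩ := aux_sheets hloc y hfin
  set T : Set X := ⋃ x ∈ f ⁻¹' {y}, U x with hT
  have hTo : IsOpen T := isOpen_biUnion fun x _ => hUo x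
  have hC : IsCompact (f ⁻¹' K \ T) := (hproper K hK).diff hTo
  have hfC : IsClosed (f '' (f ⁻¹' K \ T)) := (hC.image hf).isClosed
  refine ⟨(⋂ x ∈ f ⁻¹' {y}, f '' U x) \ f '' (f ⁻¹' K \ T),
    (hfin.isOpen_biInter fun x _ => hloc.isOpenMap _ (hUo x)).sdiff hfC, ⟨?_, ?_⟩, ?_⟩
  · exact Set.mem_biInter fun x hx => ⟨x, hUm x hx, hx⟩
  · rintro ⟨z, hz, hzy⟩
    exact hz.2 (Set.mem_biUnion hzy (hUm z hzy))
  · rintro y' ⟨⟨hy'V, hy'C⟩, hy'K⟩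
    set φ : X → X := fun x => (e x).symm y' with hφdef
    have hφ : ∀ x ∈ f ⁻¹' {y}, φ x ∈ U x ∧ f (φ x) = y' := by
      intro x hx
      obtain ⟨u, hu, hfu⟩ := Set.mem_iInter₂.mp hy'V x hx
      have hux : φ x = u := by
        rw [hφdef]; dsimp only
        rw [← hfu, hfe x]
        exact (e x).left_inv (hUs x hu)
      exact ⟨hux ▸ hu, by rw [hux, hfu]⟩
    have himg : φ '' (f ⁻¹' {y}) = f ⁻¹' {y'} := by
      apply Set.Subset.antisymm
      · rintro _ ⟨x, hx, rfl⟩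
        exact (hφ x hx).2
      · intro z hz
        have hzK : z ∈ f ⁻¹' K := by simp only [Set.mem_preimage]; rw [hz.out]; exact hy'K
        have hzT : z ∈ T := by
          by_contra hzT
          exact hy'C ⟨z, ⟨hzK, hzT⟩, hz⟩
        obtain ⟨x, hx, hzU⟩ := Set.mem_iUnion₂.mp hzT
        refine ⟨x, hx, ?_⟩
        rw [hφdef]; dsimp only
        rw [← hz.out, hfe x]
        exact (e x).left_inv (hUs x hzU)
    have hinj : Set.InjOn φ (f ⁻¹' {y}) := by
      intro x hx x' hx' hxx'
      by_contra hne
      exact Set.disjoint_left.mp (hUd hx hx' hne) (hφ x hx).1 (hxx' ▸ (hφ x' hx').1)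
    rw [← himg, Set.ncard_image_of_injOn hinj]

/-- The fiber cardinality is globally constant when the base is path-connected. -/
lemma aux_count_const [T2Space X] [T2Space Y] [PathConnectedSpace Y] (hf : Continuous f)
    (hproper : ∀ K : Set Y, IsCompact K → IsCompact (f ⁻¹' K))
    (hloc : IsLocalHomeomorph f) (y y' : Y) :
    (f ⁻¹' {y}).ncard = (f ⁻¹' {y'}).ncard := by
  obtain ⟨γ⟩ := PathConnectedSpace.joined y y'
  have hK : IsCompact (Set.range γ) := isCompact_range γ.continuous
  have hlc : IsLocallyConstant (fun t : unitInterval => (f ⁻¹' {γ t}).ncard) := by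
    rw [IsLocallyConstant.iff_eventually_eq]
    intro t
    obtain ⟨V, hVo, hVy, hVc⟩ := aux_local_count hf hproper hloc hK (Set.mem_range_self t)
    filter_upwards [γ.continuous.continuousAt.preimage_mem_nhds (hVo.mem_nhds hVy)] with t' ht'
    exact hVc _ ⟨ht', Set.mem_range_self _⟩
  simpa using hlc.apply_eq_of_preconnectedSpace 0 1

end Aux2

theorem proper_local_homeomorph_is_covering
    {X Y : Type*} [TopologicalSpace X] [TopologicalSpace Y]
    [T2Space X] [T2Space Y] [PathConnectedSpace Y]
    (f : X → Y) (hf : Continuous f) (hsurj : Function.Surjective f)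
    (hproper : ∀ K : Set Y, IsCompact K → IsCompact (f ⁻¹' K))
    (hloc : IsLocalHomeomorph f) :
    IsCoveringMap f := by
  intro y
  classical
  haveI hdisc : DiscreteTopology ↥(f ⁻¹' {y}) := aux_fiber_discrete hloc y
  have hfin : (f ⁻¹' {y}).Finite := aux_fiber_finite hloc hproper y
  obtain ⟨e, U, hfe, hUo, hUm, hUs, hUd⟩ := aux_sheets hloc y hfin
  haveI hne : Nonempty ↥(f ⁻¹' {y}) := by
    obtain ⟨x, hx⟩ := hsurj y
    exact ⟨⟨x, hx⟩⟩
  set V : Set Y := ⋂ x ∈ f ⁻¹' {y}, f '' U x with hVdef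
  have hVo : IsOpen V := hfin.isOpen_biInter fun x _ => hloc.isOpenMap _ (hUo x)
  have hyV : y ∈ V := Set.mem_biInter fun x hx => ⟨x, hUm x hx, hx⟩
  have hsymm : ∀ x ∈ f ⁻¹' {y}, ∀ v ∈ V, (e x).symm v ∈ U x ∧ f ((e x).symm v) = v := by
    intro x hx v hv
    obtain ⟨u, hu, hfu⟩ := Set.mem_iInter₂.mp hv x hx
    have huu : (e x).symm v = u := by
      rw [← hfu, hfe x]
      exact (e x).left_inv (hUs x hu)
    exact ⟨huu ▸ hu, by rw [huu, hfu]⟩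
  have hvt : ∀ (x : ↥(f ⁻¹' {y})), ∀ v ∈ V, v ∈ (e ↑x).target := by
    intro x v hv
    obtain ⟨u, hu, hfu⟩ := Set.mem_iInter₂.mp hv ↑x x.2
    have hm := (e ↑x).map_source (hUs _ hu)
    rwa [← hfe ↑x, hfu] at hm
  -- the preimage of V is contained in the union of the sheets
  have hkey : ∀ z, f z ∈ V → ∃ x : ↥(f ⁻¹' {y}), z ∈ U ↑x := by
    intro z hz
    set φ : X → X := fun x => (e x).symm (f z) with hφdef
    have hφm : ∀ x ∈ f ⁻¹' {y}, φ x ∈ U x ∧ f (φ x) = f z := fun x hx => hsymm x hx _ hz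
    have hinj : Set.InjOn φ (f ⁻¹' {y}) := by
      intro x hx x' hx' hxx'
      by_contra hnex
      exact Set.disjoint_left.mp (hUd hx hx' hnex) (hφm x hx).1 (hxx' ▸ (hφm x' hx').1)
    have hsub : φ '' (f ⁻¹' {y}) ⊆ f ⁻¹' {f z} := by
      rintro _ ⟨x, hx, rfl⟩
      exact (hφm x hx).2
    have hcard : (f ⁻¹' {f z}).ncard ≤ (φ '' (f ⁻¹' {y})).ncard := by
      rw [Set.ncard_image_of_injOn hinj, aux_count_const hf hproper hloc (f z) y]
    have heq : φ '' (f ⁻¹' {y}) = f ⁻¹' {f z} :=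
      Set.eq_of_subset_of_ncard_le hsub hcard (aux_fiber_finite hloc hproper (f z))
    have hzm : z ∈ φ '' (f ⁻¹' {y}) := heq ▸ (rfl : f z = f z)
    obtain ⟨x, hx, hxz⟩ := hzm
    exact ⟨⟨x, hx⟩, hxz ▸ (hφm x hx).1⟩
  -- the sheet selector
  let σ : X → ↥(f ⁻¹' {y}) := fun z =>
    if h : ∃ x : ↥(f ⁻¹' {y}), z ∈ U ↑x then h.choose else Classical.arbitrary _
  have hσ : ∀ (x : ↥(f ⁻¹' {y})) (z : X), z ∈ U ↑x → σ z = x := by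
    intro x z hz
    have h : ∃ x' : ↥(f ⁻¹' {y}), z ∈ U ↑x' := ⟨x, hz⟩
    simp only [σ, dif_pos h]
    by_contra hnex
    have hne' : (h.choose : X) ≠ ↑x := fun hc => hnex (Subtype.ext hc)
    exact Set.disjoint_left.mp (hUd h.choose.2 x.2 hne') h.choose_spec hz
  have hσm : ∀ z, f z ∈ V → z ∈ U ↑(σ z) := by
    intro z hz
    obtain ⟨x, hx⟩ := hkey z hz
    rw [hσ x z hx]
    exact hx
  refine IsEvenlyCovered.of_trivialization (I := ↥(f ⁻¹' {y})) (t := {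
    baseSet := V
    open_baseSet := hVo
    source_eq := rfl
    target_eq := rfl
    proj_toFun := fun p _ => rfl
    toOpenPartialHomeomorph := {
    toFun := fun z => (f z, σ z)
    invFun := fun p => (e ↑p.2).symm p.1
    source := f ⁻¹' V
    target := V ×ˢ Set.univ
    map_source' := fun z hz => ⟨hz, Set.mem_univ _⟩
    map_target' := by
      rintro ⟨v, x⟩ ⟨hv, -⟩
      exact Set.mem_preimage.mpr (by rw [(hsymm ↑x x.2 v hv).2]; exact hv)
    left_inv' := by
      intro z hz
      show (e ↑(σ z)).symm (f z) = z
      rw [show f z = e ↑(σ z) z from congrFun (hfe ↑(σ z)) z]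
      exact (e ↑(σ z)).left_inv (hUs _ (hσm z hz))
    right_inv' := by
      rintro ⟨v, x⟩ ⟨hv, -⟩
      have h1 := hsymm ↑x x.2 v hv
      exact Prod.ext (h1.2) (hσ x _ h1.1)
    open_source := hVo.preimage hf
    open_target := hVo.prod isOpen_univ
    continuousOn_toFun := by
      intro z hz
      apply ContinuousAt.continuousWithinAt
      refine hf.continuousAt.prodMk ?_
      have hev : σ =ᶠ[𝓝 z] fun _ => σ z :=
        Filter.eventually_of_mem ((hUo _).mem_nhds (hσm z hz)) (fun z' hz' => hσ (σ z) z' hz')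
      exact (continuousAt_congr hev).mpr continuousAt_const
    continuousOn_invFun := by
      rintro ⟨v, x⟩ ⟨hv, -⟩
      apply ContinuousAt.continuousWithinAt
      have hc : ContinuousAt (fun p : Y × ↥(f ⁻¹' {y}) => (e ↑x).symm p.1) (v, x) :=
        ((e ↑x).continuousAt_symm (hvt x v hv)).comp continuousAt_fst
      refine hc.congr ?_
      refine Filter.eventually_of_mem
        ((isOpen_univ.prod (isOpen_discrete ({x} : Set ↥(f ⁻¹' {y})))).mem_nhds
          ⟨Set.mem_univ _, rfl⟩) ?_
      rintro ⟨v', x'⟩ ⟨-, hx'⟩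
      have : x' = x := hx'
      rw [this]
  } }) hyV
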